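/- Let L be a d-dimensional rational polytope in R^d with max-facet-width m(L) = m, i.e., L can be written as {x ∈ R^d : b_i − m ≤ ⟨a_i, x⟩ ≤ b_i, i ∈ [n]} with a_i ∈ Z^d \ {0} and b_i ∈ Z. Then vol(L) ≤ m^d. -/

import Mathlib

open Pointwise

noncomputable section

/-- Standard inner product on `Fin d → ℝ`. -/
def dot {d : ℕ} (a x : Fin d → ℝ) : ℝ := ∑ i, a i * x i

/-- A polyhedron: intersection of finitely many closed halfspaces. -/
def IsPolyhedron {d : ℕ} (P : Set (Fin d → ℝ)) : Prop :=
  ∃ (n : ℕ) (a : Fin n → Fin d → ℝ) (b : Fin n → ℝ),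
    P = {x | ∀ i, dot (a i) x ≤ b i}

/-- A rational polyhedron: intersection of finitely many rational closed halfspaces. -/
def IsRationalPolyhedron {d : ℕ} (P : Set (Fin d → ℝ)) : Prop :=
  ∃ (n : ℕ) (a : Fin n → Fin d → ℚ) (b : Fin n → ℚ),
    P = {x | ∀ i, dot (fun j => ((a i j : ℝ))) x ≤ (b i : ℝ)}

/-- Recession cone of a set: `{u : P + u ⊆ P}`. -/
def recCone {d : ℕ} (P : Set (Fin d → ℝ)) : Set (Fin d → ℝ) :=
  {u | ∀ x ∈ P, x + u ∈ P}

/-- A set of vectors is a linear subspace. -/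
def IsLinearSubspaceSet {d : ℕ} (S : Set (Fin d → ℝ)) : Prop :=
  ∃ W : Submodule ℝ (Fin d → ℝ), S = (W : Set (Fin d → ℝ))

/-- A set is line-free if it contains no affine line. -/
def LineFree {d : ℕ} (P : Set (Fin d → ℝ)) : Prop :=
  ¬ ∃ (x v : Fin d → ℝ), v ≠ 0 ∧ ∀ t : ℝ, x + t • v ∈ P

/-- `F` is a face of the convex set `P`. -/
def IsFaceOf {d : ℕ} (P F : Set (Fin d → ℝ)) : Prop :=
  F ⊆ P ∧ Convex ℝ F ∧ ∀ x ∈ P, ∀ y ∈ P, ∀ t : ℝ, 0 < t → t < 1 →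
    t • x + (1 - t) • y ∈ F → x ∈ F ∧ y ∈ F

/-- Affine dimension of a set. -/
def adim {d : ℕ} (S : Set (Fin d → ℝ)) : ℕ :=
  Module.finrank ℝ (affineSpan ℝ S).direction

/-- Vertices: 0-dimensional faces, i.e. singleton faces. -/
def IsVertex {d : ℕ} (P : Set (Fin d → ℝ)) (x : Fin d → ℝ) : Prop :=
  IsFaceOf P {x}

/-- Union of all edges (1-dimensional faces) of `P`. -/
def edgeUnion {d : ℕ} (P : Set (Fin d → ℝ)) : Set (Fin d → ℝ) :=
  ⋃₀ {e | IsFaceOf P e ∧ adim e = 1}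

/-- A representation of `L` with width `m`:
`L = {x : bᵢ - m ≤ ⟨aᵢ, x⟩ ≤ bᵢ, i ∈ [n]}` with `aᵢ ∈ ℤ^d \ {0}`, `bᵢ ∈ ℤ`. -/
def HasWidthRep {d : ℕ} (L : Set (Fin d → ℝ)) (m : ℕ) : Prop :=
  ∃ (n : ℕ) (a : Fin n → Fin d → ℤ) (b : Fin n → ℤ),
    (∀ i, a i ≠ 0) ∧
    L = {x | ∀ i, (b i : ℝ) - (m : ℝ) ≤ dot (fun j => ((a i j : ℝ))) x ∧
        dot (fun j => ((a i j : ℝ))) x ≤ (b i : ℝ)}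

/-- Max-facet-width, `+∞` if no representation exists. -/
def mfw {d : ℕ} (L : Set (Fin d → ℝ)) : ℕ∞ :=
  sInf {m : ℕ∞ | ∃ k : ℕ, m = (k : ℕ∞) ∧ HasWidthRep L k}

/-- The set of integral points of `ℝ^d`. -/
def intPoints (d : ℕ) : Set (Fin d → ℝ) :=
  {x | ∃ z : Fin d → ℤ, x = fun i => (z i : ℝ)}

/-- A lattice-free set: `d`-dimensional closed convex set whose interior
contains no integral point. -/
def LatticeFree {d : ℕ} (L : Set (Fin d → ℝ)) : Prop :=
  IsClosed L ∧ Convex ℝ L ∧ adim L = d ∧ interior L ∩ intPoints d = ∅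

/-- A maximal lattice-free set. -/
def MaxLatticeFree {d : ℕ} (L : Set (Fin d → ℝ)) : Prop :=
  LatticeFree L ∧ ∀ L' : Set (Fin d → ℝ), LatticeFree L' → L ⊆ L' → L = L'

/-- `ℤ^d`-equivalence: `Y = U(X) + b` for a unimodular `U` and integral `b`. -/
def ZdEquiv {d : ℕ} (X Y : Set (Fin d → ℝ)) : Prop :=
  ∃ (U : Matrix (Fin d) (Fin d) ℤ) (b : Fin d → ℤ),
    (U.det = 1 ∨ U.det = -1) ∧
    Y = (fun x => (U.map (Int.cast : ℤ → ℝ)).mulVec x + fun i => (b i : ℝ)) '' X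

/-- Sign vectors with an even number of `-1` entries. -/
def Aplus (d : ℕ) : Set (Fin d → ℝ) :=
  {a | (∀ i, a i = 1 ∨ a i = -1) ∧ Even {i | a i = -1}.ncard}

/-- Sign vectors with an odd number of `-1` entries. -/
def Aminus (d : ℕ) : Set (Fin d → ℝ) :=
  {a | (∀ i, a i = 1 ∨ a i = -1) ∧ Odd {i | a i = -1}.ncard}

lemma dot_add_smul {d : ℕ} (a x u : Fin d → ℝ) (t : ℝ) :
    dot a (x + t • u) = dot a x + t * dot a u := by
  simp only [dot, Pi.add_apply, Pi.smul_apply, smul_eq_mul, mul_add, Finset.sum_add_distrib,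
    Finset.mul_sum]
  ring_nf
  congr 1
  apply Finset.sum_congr rfl
  intro i _
  ring

theorem stmt6 {d : ℕ} (L : Set (Fin d → ℝ)) (m : ℕ)
    (hL : IsRationalPolyhedron L) (hb : Bornology.IsBounded L)
    (hdim : adim L = d)
    (hm : mfw L = (m : ℕ∞)) :
    MeasureTheory.volume L ≤ (m : ENNReal) ^ d := by
  classical
  -- Step 1: extract a width-m representation
  have hrep : HasWidthRep L m := by
    unfold mfw at hm
    have h1 : sInf {μ : ℕ∞ | ∃ k : ℕ, μ = (k : ℕ∞) ∧ HasWidthRep L k} < ((m + 1 : ℕ) : ℕ∞) := by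
      rw [hm]; exact_mod_cast Nat.lt_succ_self m
    obtain ⟨s, hs, hlt⟩ := sInf_lt_iff.mp h1
    obtain ⟨k, rfl, hk⟩ := hs
    have hub : (m : ℕ∞) ≤ (k : ℕ∞) := hm ▸ sInf_le ⟨k, rfl, hk⟩
    have hkm : k = m := le_antisymm
      (Nat.lt_succ_iff.mp (by exact_mod_cast hlt)) (by exact_mod_cast hub)
    rwa [hkm] at hk
  obtain ⟨n, a, b, ha0, hLeq⟩ := hrep
  rcases L.eq_empty_or_nonempty with rfl | ⟨x0, hx0⟩
  · simp
  set v : Fin n → (Fin d → ℝ) := fun i j => (a i j : ℝ) with hv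
  -- Step 2: the normals span ℝ^d
  have hspan : Submodule.span ℝ (Set.range v) = ⊤ := by
    by_contra hW
    obtain ⟨f, hf0, hfker⟩ := Submodule.exists_dual_map_eq_bot_of_lt_top
      (lt_top_iff_ne_top.mpr hW) inferInstance
    set u : Fin d → ℝ := fun j => f (Pi.single (M := fun _ : Fin d => ℝ) j 1) with hu
    have hfd : ∀ x : Fin d → ℝ, f x = dot x u := by
      intro x
      have hxsum : x = ∑ j, x j • (Pi.single j 1 : Fin d → ℝ) := by
        funext k
        simp [Pi.single_apply]
      conv_lhs => rw [hxsum]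
      rw [map_sum]
      simp [dot, hu]
    have hu0 : u ≠ 0 := by
      intro h
      apply hf0
      ext x
      have := congrFun h x
      simpa [hu] using this
    have hdotu : ∀ i, dot (v i) u = 0 := by
      intro i
      rw [← hfd]
      have : v i ∈ Submodule.span ℝ (Set.range v) := Submodule.subset_span ⟨i, rfl⟩
      have := Submodule.mem_map_of_mem (f := f) this
      rw [hfker] at this
      simpa using this
    have hline : ∀ t : ℝ, x0 + t • u ∈ L := by
      intro t
      rw [hLeq] at hx0 ⊢
      intro i
      have := hx0 i
      have h0 : dot (fun j => ((a i j : ℝ))) u = 0 := hdotu i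
      have hd : dot (fun j => ((a i j : ℝ))) (x0 + t • u)
          = dot (fun j => ((a i j : ℝ))) x0 := by
        rw [dot_add_smul, h0]; ring
      rw [hd]
      exact this
    obtain ⟨R, hR⟩ := isBounded_iff_forall_norm_le.mp hb
    have hux : (0:ℝ) < ‖u‖ := norm_pos_iff.mpr hu0
    set t : ℝ := (R + ‖x0‖ + 1) / ‖u‖ with ht
    have hR0 : 0 ≤ R := le_trans (norm_nonneg x0) (hR x0 hx0)
    have ht0 : 0 ≤ t := by positivity
    have h1 : ‖x0 + t • u‖ ≤ R := hR _ (hline t)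
    have h2 : ‖t • u‖ ≤ ‖x0 + t • u‖ + ‖x0‖ := by
      calc ‖t • u‖ = ‖(x0 + t • u) + (-x0)‖ := by ring_nf
        _ ≤ ‖x0 + t • u‖ + ‖x0‖ := by
            simpa using norm_add_le (x0 + t • u) (-x0)
    have h3 : ‖t • u‖ = R + ‖x0‖ + 1 := by
      rw [norm_smul, Real.norm_eq_abs, abs_of_nonneg ht0, ht,
        div_mul_cancel₀ _ (ne_of_gt hux)]
    nlinarith
  -- Step 3: select d linearly independent rows
  obtain ⟨s, hsub, hspan', hli⟩ := exists_linearIndependent ℝ (Set.range v)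
  rw [hspan] at hspan'
  have hsfin : s.Finite := (Set.finite_range v).subset hsub
  haveI := hsfin.fintype
  let B : Module.Basis s ℝ (Fin d → ℝ) := Module.Basis.mk hli (by rw [Subtype.range_coe, hspan'])
  have hcard : Fintype.card s = d := by
    have h := Module.finrank_eq_card_basis B
    rw [Module.finrank_fin_fun] at h
    omega
  let e : Fin d ≃ s := (Fintype.equivFinOfCardEq hcard).symm
  choose idx hidx using fun j : Fin d => hsub (e j).2
  set A : Matrix (Fin d) (Fin d) ℝ := Matrix.of (fun j k => v (idx j) k) with hA
  have hrowseq : (fun j : Fin d => (A j : Fin d → ℝ)) = fun j => ((e j : Fin d → ℝ)) := by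
    funext j
    have : v (idx j) = ((e j : Fin d → ℝ)) := hidx j
    exact this
  have hrows : LinearIndependent ℝ (fun j : Fin d => (A j : Fin d → ℝ)) := by
    rw [hrowseq]
    exact hli.comp e (Equiv.injective e)
  have hAunit : IsUnit A := Matrix.linearIndependent_rows_iff_isUnit.mp hrows
  have hdet0 : A.det ≠ 0 := by
    have := (Matrix.isUnit_iff_isUnit_det A).mp hAunit
    exact this.ne_zero
  set A' : Matrix (Fin d) (Fin d) ℤ := Matrix.of (fun j k => a (idx j) k) with hA'
  have hmap : A = A'.map (Int.cast : ℤ → ℝ) := by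
    ext j k
    simp [hA, hA', hv, Matrix.map_apply]
  have hdetcast : A.det = ((A'.det : ℤ) : ℝ) := by
    rw [hmap]
    have h := RingHom.map_det (Int.castRingHom ℝ) A'
    simpa [RingHom.mapMatrix_apply] using h.symm
  have hdet1 : (1 : ℝ) ≤ |A.det| := by
    rw [hdetcast]
    have hne : A'.det ≠ 0 := by
      intro h
      apply hdet0
      rw [hdetcast, h]
      simp
    exact_mod_cast Int.one_le_abs hne
  -- Step 4: containment in the preimage of a box
  set lo : Fin d → ℝ := fun j => (b (idx j) : ℝ) - m with hlo
  set hi : Fin d → ℝ := fun j => (b (idx j) : ℝ) with hhi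
  have hsubbox : L ⊆ (Matrix.toLin' A) ⁻¹' Set.Icc lo hi := by
    intro x hx
    rw [hLeq] at hx
    simp only [Set.mem_preimage, Set.mem_Icc, Matrix.toLin'_apply, Pi.le_def]
    constructor <;> intro j
    · have := (hx (idx j)).1
      simpa [Matrix.mulVec, dotProduct, hA, hv, dot, hlo] using this
    · have := (hx (idx j)).2
      simpa [Matrix.mulVec, dotProduct, hA, hv, dot, hhi] using this
  -- Step 5: volume computation
  have hbox : MeasureTheory.volume (Set.Icc lo hi) = (m : ENNReal) ^ d := by
    rw [Real.volume_Icc_pi]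
    have : ∀ j : Fin d, ENNReal.ofReal (hi j - lo j) = (m : ENNReal) := by
      intro j
      simp [hlo, hhi, ENNReal.ofReal_natCast]
    rw [Finset.prod_congr rfl (fun j _ => this j)]
    simp
  calc MeasureTheory.volume L
      ≤ MeasureTheory.volume ((Matrix.toLin' A) ⁻¹' Set.Icc lo hi) :=
        MeasureTheory.measure_mono hsubbox
    _ = ENNReal.ofReal |(LinearMap.det (Matrix.toLin' A))⁻¹|
          * MeasureTheory.volume (Set.Icc lo hi) := by
        exact MeasureTheory.Measure.addHaar_preimage_linearMap _
          (by rw [LinearMap.det_toLin']; exact hdet0) _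
    _ ≤ 1 * (m : ENNReal) ^ d := by
        rw [hbox]
        gcongr
        rw [LinearMap.det_toLin', abs_inv]
        refine ENNReal.ofReal_le_one.mpr ?_
        rw [inv_le_one_iff₀]
        right; exact hdet1
    _ = (m : ENNReal) ^ d := one_mul _
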